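/- Let (H, L̃) be a cut-and-project scheme over G with star map ⋆ : p₁(L̃) → H. If a Delone set 𝓛 ⊂ G satisfies 𝓛 ⊂ ⋀(W) for some compact window W ⊂ H, then 𝓛 − 𝓛 ⊂ 𝓛 + F for some finite set F ⊂ G. -/

import Mathlib

open Pointwise

/-- A cut-and-project scheme over G with internal group H: a lattice L̃ in G × H
(uniformly discrete and cocompact subgroup) such that the first projection is
injective on L̃ and the second projection has dense image. -/
structure CutProjectScheme (G H : Type) [AddCommGroup G] [TopologicalSpace G]
    [AddCommGroup H] [TopologicalSpace H] where
  L : AddSubgroup (G × H)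
  unifDiscrete : ∃ U ∈ nhds (0 : G × H), ∀ x ∈ L, x ∈ U → x = 0
  cocompact : ∃ K : Set (G × H), IsCompact K ∧ ∀ g : G × H, ∃ x ∈ L, g - x ∈ K
  projInj : ∀ x ∈ L, ∀ y ∈ L, (x : G × H).1 = (y : G × H).1 → x = y
  denseSnd : Dense (Prod.snd '' (L : Set (G × H)))

/-- The cut-and-project set ⋀(W) associated to a window W ⊂ H. -/
def cutProject {G H : Type} [AddCommGroup G] [TopologicalSpace G]
    [AddCommGroup H] [TopologicalSpace H]
    (S : CutProjectScheme G H) (W : Set H) : Set G :=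
  {g : G | ∃ p ∈ S.L, (p : G × H).1 = g ∧ (p : G × H).2 ∈ W}


lemma finite_of_unifDiscrete_inter_compact {X : Type} [AddCommGroup X]
    [TopologicalSpace X] [IsTopologicalAddGroup X]
    (L : AddSubgroup X) (hL : ∃ U ∈ nhds (0 : X), ∀ x ∈ L, x ∈ U → x = 0)
    {K : Set X} (hK : IsCompact K) : ((L : Set X) ∩ K).Finite := by
  obtain ⟨U, hU, hU0⟩ := hL
  obtain ⟨V, hV, hVU⟩ := exists_nhds_zero_half hU
  have hVU' : ∀ a ∈ V, ∀ b ∈ V ∩ (-V), a - b ∈ U := by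
    intro a ha b hb
    rw [sub_eq_add_neg]
    exact hVU a ha (-b) hb.2
  set V' : Set X := V ∩ (-V) with hV'
  have hV'nhds : V' ∈ nhds (0 : X) := by
    exact Filter.inter_mem hV (neg_mem_nhds_zero X hV)
  obtain ⟨t, -, ht⟩ := hK.elim_nhds_subcover (fun x => (fun y => y - x) ⁻¹' V')
    (fun x _ => by
      apply ContinuousAt.preimage_mem_nhds
      · exact (continuous_id.sub continuous_const).continuousAt
      · simpa using hV'nhds)
  apply Set.Finite.subset (Set.Finite.biUnion t.finite_toSet
    (fun x _ => ?_ : ∀ x ∈ t, ((L : Set X) ∩ ((fun y => y - x) ⁻¹' V')).Finite))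
  · intro y hy
    obtain ⟨x, hxt, hx⟩ := Set.mem_iUnion₂.1 (ht hy.2)
    exact Set.mem_iUnion₂.2 ⟨x, hxt, hy.1, hx⟩
  · apply Set.Subsingleton.finite
    intro a ha b hb
    have hab : a - b ∈ U := by
      have : a - b = (a - x) - (b - x) := by abel
      rw [this]
      exact hVU' _ ha.2.1 _ ⟨hb.2.1, hb.2.2⟩
    have := hU0 (a - b) (sub_mem ha.1 hb.1) hab
    exact sub_eq_zero.1 this

/-- If a Delone set 𝓛 is contained in ⋀(W) for a compact window W,
then 𝓛 − 𝓛 ⊂ 𝓛 + F for some finite set F. -/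
theorem delone_in_cutProject_is_meyer
    {G H : Type} [AddCommGroup G] [TopologicalSpace G] [IsTopologicalAddGroup G]
    [LocallyCompactSpace G]
    [AddCommGroup H] [TopologicalSpace H] [IsTopologicalAddGroup H]
    [LocallyCompactSpace H]
    (S : CutProjectScheme G H) (W : Set H) (hW : IsCompact W)
    (𝓛 : Set G)
    (hUD : ∃ U ∈ nhds (0 : G), ∀ x ∈ 𝓛, ∀ y ∈ 𝓛, x - y ∈ U → x = y)
    (hRD : ∃ K : Set G, IsCompact K ∧ ∀ g : G, ∃ x ∈ 𝓛, g - x ∈ K)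
    (hsub : 𝓛 ⊆ cutProject S W) :
    ∃ F : Set G, F.Finite ∧ 𝓛 - 𝓛 ⊆ 𝓛 + F := by
  obtain ⟨K, hK, hKd⟩ := hRD
  have hW3 : IsCompact (W - W - W) := by
    have h2 : IsCompact (W - W) := by
      rw [sub_eq_add_neg]; exact hW.add hW.neg
    rw [sub_eq_add_neg]; exact h2.add hW.neg
  have hfin : ((S.L : Set (G × H)) ∩ (K ×ˢ (W - W - W))).Finite :=
    finite_of_unifDiscrete_inter_compact S.L S.unifDiscrete (hK.prod hW3)
  refine ⟨Prod.fst '' ((S.L : Set (G × H)) ∩ (K ×ˢ (W - W - W))), hfin.image _, ?_⟩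
  intro d hd
  obtain ⟨x, hx, y, hy, hxy⟩ := Set.mem_sub.1 hd
  obtain ⟨z, hz, hdz⟩ := hKd d
  obtain ⟨p, hp, hp1, hp2⟩ := hsub hx
  obtain ⟨q, hq, hq1, hq2⟩ := hsub hy
  obtain ⟨r, hr, hr1, hr2⟩ := hsub hz
  have hmem : p - q - r ∈ S.L := sub_mem (sub_mem hp hq) hr
  have hfst : (p - q - r).1 = d - z := by
    simp only [Prod.fst_sub, hp1, hq1, hr1, ← hxy]
  have hsnd : (p - q - r).2 ∈ W - W - W := by
    exact Set.sub_mem_sub (Set.sub_mem_sub hp2 hq2) hr2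
  refine Set.mem_add.2 ⟨z, hz, d - z, ⟨p - q - r, ⟨hmem, by rw [hfst]; exact hdz, hsnd⟩, hfst⟩, by abel⟩
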